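/- arXiv:1705.02257 — 4 statements merged into one kernel-verified Lean document; each statement's English description precedes it below -/
import Mathlib

section
/- There exist absolute constants C ≥ 1 and c ≥ 1 with the following property. Let N, k, α, r be integers with k ≥ 2, r ≥ 2, α ≥ C·ln(k·r), and αk − 1 ≤ N. Let S be a subset of {1,…,N} of size αk − 1 chosen uniformly at random among all such subsets, let y_1 < y_2 < … < y_{αk−1} be the elements of S in increasing order, and define the equidistant pivots s_i = y_{iα} for i = 1,…,k−1, together with s_0 = 0 and s_k = N. Then with probability at least 1 − 1/r, every bucket B_i = {v ∈ {1,…,N} : s_{i−1} < v ≤ s_i} (i = 1,…,k) has size at most c·N/k. -/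
attribute [local instance] Classical.propDecidable

/-- The `i`-th equidistant pivot chosen from the sample `S ⊆ {1,…,N}` (of size `α·k - 1`)
with oversampling factor `α`: `s 0 = 0`, `s k = N`, and for `1 ≤ i ≤ k - 1`,
`s i` is the `(i·α)`-th smallest element of `S`. -/
noncomputable def pivot (N k α : ℕ) (S : Finset ℕ) (i : ℕ) : ℕ :=
  if i = 0 then 0 else if i = k then N else (S.sort (· ≤ ·)).getD (i * α - 1) 0



lemma rank_sort (S : Finset ℕ) (t : ℕ) (ht : t < S.card) :
    (S.filter (· ≤ (S.sort (· ≤ ·)).getD t 0)).card = t + 1 := by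
  set L := S.sort (· ≤ ·) with hL
  have hlen : L.length = S.card := Finset.length_sort _
  have htL : t < L.length := by omega
  have hsorted : L.SortedLT := Finset.sortedLT_sort S
  have hmono : StrictMono L.get := hsorted.strictMono_get
  have hgetD : L.getD t 0 = L.get ⟨t, htL⟩ := by
    rw [List.getD_eq_getElem L 0 htL]; rfl
  rw [hgetD]
  have himg : S.filter (· ≤ L.get ⟨t, htL⟩)
      = (Finset.Iic (⟨t, htL⟩ : Fin L.length)).image L.get := by
    ext x
    simp only [Finset.mem_filter, Finset.mem_image, Finset.mem_Iic]
    constructor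
    · rintro ⟨hxS, hxle⟩
      have hxL : x ∈ L := (Finset.mem_sort (α := ℕ) (· ≤ ·)).2 hxS
      obtain ⟨u, hu⟩ := List.mem_iff_get.1 hxL
      exact ⟨u, hmono.le_iff_le.1 (by rw [hu]; exact hxle), hu⟩
    · rintro ⟨u, hut, hux⟩
      refine ⟨?_, ?_⟩
      · rw [← hux]; exact (Finset.mem_sort (α := ℕ) (· ≤ ·)).1 (L.get_mem _)
      · rw [← hux]; exact hmono.monotone hut
  rw [himg, Finset.card_image_of_injective _ hmono.injective, Fin.card_Iic]


lemma count_inter (Ω B : Finset ℕ) (hB : B ⊆ Ω) (m j : ℕ) (hj : j ≤ m) :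
    ((Ω.powersetCard m).filter fun S => (S ∩ B).card = j).card
      = B.card.choose j * ((Ω \ B).card.choose (m - j)) := by
  rw [← Finset.card_powersetCard, ← Finset.card_powersetCard, ← Finset.card_product]
  apply Finset.card_bij' (fun S _ => (S ∩ B, S \ B)) (fun P _ => P.1 ∪ P.2)
  · rintro S hS
    simp only [Finset.mem_filter, Finset.mem_powersetCard] at hS
    obtain ⟨⟨hSΩ, hScard⟩, hSj⟩ := hS
    simp only [Finset.mem_product, Finset.mem_powersetCard]
    refine ⟨⟨Finset.inter_subset_right, hSj⟩, ?_, ?_⟩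
    · exact fun x hx => by
        simp only [Finset.mem_sdiff] at hx ⊢
        exact ⟨hSΩ hx.1, hx.2⟩
    · have := Finset.card_inter_add_card_sdiff S B
      omega
  · rintro ⟨P, Q⟩ hPQ
    simp only [Finset.mem_product, Finset.mem_powersetCard] at hPQ
    obtain ⟨⟨hPB, hPcard⟩, hQ, hQcard⟩ := hPQ
    have hdisj : Disjoint P Q := by
      refine Finset.disjoint_left.2 fun x hxP hxQ => ?_
      exact ((Finset.mem_sdiff.1 (hQ hxQ)).2) (hPB hxP)
    simp only [Finset.mem_filter, Finset.mem_powersetCard]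
    refine ⟨⟨?_, ?_⟩, ?_⟩
    · exact Finset.union_subset (hPB.trans hB) (hQ.trans (Finset.sdiff_subset))
    · rw [Finset.card_union_of_disjoint hdisj, hPcard, hQcard]; omega
    · have h1 : (P ∪ Q) ∩ B = P := by
        rw [Finset.union_inter_distrib_right]
        have h2 : P ∩ B = P := Finset.inter_eq_left.2 hPB
        have h3 : Q ∩ B = ∅ := by
          refine Finset.eq_empty_of_forall_notMem fun x hx => ?_
          have := Finset.mem_inter.1 hx
          exact (Finset.mem_sdiff.1 (hQ this.1)).2 this.2
        rw [h2, h3, Finset.union_empty]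
      rw [h1, hPcard]
  · intro S hS
    ext x; simp only [Finset.mem_union, Finset.mem_inter, Finset.mem_sdiff]; tauto
  · rintro ⟨P, Q⟩ hPQ
    simp only [Finset.mem_product, Finset.mem_powersetCard] at hPQ
    obtain ⟨⟨hPB, hPcard⟩, hQ, hQcard⟩ := hPQ
    have h1 : (P ∪ Q) ∩ B = P := by
      rw [Finset.union_inter_distrib_right]
      have h2 : P ∩ B = P := Finset.inter_eq_left.2 hPB
      have h3 : Q ∩ B = ∅ := by
        refine Finset.eq_empty_of_forall_notMem fun x hx => ?_
        have := Finset.mem_inter.1 hx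
        exact (Finset.mem_sdiff.1 (hQ this.1)).2 this.2
      rw [h2, h3, Finset.union_empty]
    have h4 : (P ∪ Q) \ B = Q := by
      rw [Finset.union_sdiff_distrib]
      have h5 : P \ B = ∅ := Finset.sdiff_eq_empty_iff_subset.2 hPB
      have h6 : Q \ B = Q := by
        refine Finset.sdiff_eq_self_of_disjoint (Finset.disjoint_left.2 fun x hx hxB => ?_)
        exact (Finset.mem_sdiff.1 (hQ hx)).2 hxB
      rw [h5, h6, Finset.empty_union]
    simp [h1, h4]


lemma doubling_sum {T : ℕ → ℕ} {n : ℕ} (h : ∀ j < n, 2 * T j ≤ T (j+1)) :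
    ∀ t, t ≤ n → ∑ j ∈ Finset.range (t+1), T j ≤ 2 * T t := by
  intro t
  induction t with
  | zero => intro; simp [two_mul]
  | succ t ih =>
    intro ht
    rw [Finset.sum_range_succ]
    have h1 := ih (by omega)
    have h2 := h t (by omega)
    omega
lemma doubling_pow {T : ℕ → ℕ} {n : ℕ} (h : ∀ j < n, 2 * T j ≤ T (j+1)) :
    ∀ s t, t + s ≤ n → 2^s * T t ≤ T (t + s) := by
  intro s
  induction s with
  | zero => intro t _; simp
  | succ s ih =>
    intro t ht
    have h1 := ih t (by omega)
    have h2 := h (t + s) (by omega)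
    have : 2 ^ (s+1) * T t = 2 * (2^s * T t) := by ring
    rw [this, show t + (s+1) = (t+s)+1 from rfl]
    calc 2 * (2^s * T t) ≤ 2 * T (t+s) := by omega
    _ ≤ T (t+s+1) := h2

lemma nat_add_div_le (a c b : ℕ) (hb : 0 < b) :
    a / b + c / b ≤ (a + c) / b ∧ (a + c) / b ≤ a / b + c / b + 1 := by
  rw [Nat.add_div hb]
  have := Nat.mod_lt a hb
  have := Nat.mod_lt c hb
  split_ifs <;> omega

/-- discrete IVT for monotone ℕ-valued function -/
lemma discrete_ivt (h : ℕ → ℕ) (x : ℕ) :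
    ∀ n, h 0 < x → x ≤ h n → ∃ t < n, h t < x ∧ x ≤ h (t+1) := by
  intro n
  induction n with
  | zero => intro h1 h2; omega
  | succ n ih =>
    intro h1 h2
    by_cases hc : x ≤ h n
    · obtain ⟨t, ht, h3⟩ := ih h1 hc
      exact ⟨t, by omega, h3⟩
    · exact ⟨n, by omega, by omega, h2⟩


lemma ratio_step (l nl m j : ℕ) (hjl : j + 1 ≤ l) (hjm : j + 1 ≤ m)
    (KEY : 2 * ((j+1) * (nl - (m - j - 1))) ≤ (l - j) * (m - j)) :
    2 * (l.choose j * nl.choose (m - j)) ≤ l.choose (j+1) * nl.choose (m - j - 1) := by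
  by_cases hcase : nl < m - j
  · rw [Nat.choose_eq_zero_of_lt hcase]; simp
  push_neg at hcase
  have hmj : m - j = (m - j - 1) + 1 := by omega
  have e1 : l.choose (j+1) * (j+1) = l.choose j * (l - j) := Nat.choose_succ_right_eq l j
  have e2 : nl.choose (m - j) * (m - j) = nl.choose (m - j - 1) * (nl - (m - j - 1)) := by
    rw [hmj]; exact Nat.choose_succ_right_eq nl (m - j - 1)
  apply Nat.le_of_mul_le_mul_right (c := (j+1) * (m - j)) _ (Nat.mul_pos (by omega) (by omega))
  calc 2 * (l.choose j * nl.choose (m - j)) * ((j+1) * (m - j))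
      = (l.choose j * (j+1)) * (nl.choose (m - j) * (m - j)) * 2 := by ring
    _ = (l.choose j * (j+1)) * (nl.choose (m - j - 1) * (nl - (m - j - 1))) * 2 := by rw [e2]
    _ = (l.choose j * nl.choose (m - j - 1)) * (2 * ((j+1) * (nl - (m - j - 1)))) := by ring
    _ ≤ (l.choose j * nl.choose (m - j - 1)) * ((l - j) * (m - j)) :=
        Nat.mul_le_mul_left _ KEY
    _ = (l.choose j * (l - j)) * nl.choose (m - j - 1) * (m - j) := by ring
    _ = (l.choose (j+1) * (j+1)) * nl.choose (m - j - 1) * (m - j) := by rw [e1]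
    _ = l.choose (j+1) * nl.choose (m - j - 1) * ((j+1) * (m - j)) := by ring


lemma key_int (N k α b u v : ℤ) (hb : 1 ≤ b) (hα : 9 ≤ α) (hk : 33 ≤ k)
    (h16b : 16 * b ≤ k) (hbu : N + 1 ≤ b * u + 2 * α * b)
    (h16ab : 16 * (α * b) ≤ N + 1) (hv : v + 2 * α = α * k)
    (hu0 : 0 ≤ u) (hv0 : 0 ≤ v) (hN0 : 0 ≤ N) :
    4 * α * N ≤ u * v := by
  have hα0 : (0:ℤ) ≤ α := by omega
  have h1 : 7 * N + 7 ≤ 8 * (b * u) := by nlinarith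
  have h2 : 2 * (α * k) ≤ 7 * v := by nlinarith
  have h3 : (7 * N + 7) * v ≤ (8 * (b * u)) * v := by nlinarith
  have h4 : N * (2 * (α * k)) ≤ N * (7 * v) := by nlinarith
  have h5 : 4 * α * N * (8 * b) ≤ N * (2 * (α * k)) := by
    nlinarith [mul_le_mul_of_nonneg_left h16b (mul_nonneg hα0 hN0)]
  have h6 : 4 * α * N * (8 * b) ≤ (u * v) * (8 * b) := by nlinarith
  have hb8 : (0:ℤ) < 8 * b := by omega
  exact le_of_mul_le_mul_right h6 hb8

lemma key_arith (N k α b q l m j : ℕ)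
    (hm : m + 1 = α * k) (hα : 9 ≤ α) (hk : 33 ≤ k)
    (hb : 32 * b ≤ k + 31) (hkb : k ≤ 32 * b)
    (hbq1 : b * q ≤ N) (hbq2 : N < b * q + b) (hmN : m ≤ N)
    (hql : q ≤ l) (hj : j < 2 * α) :
    2 * ((j+1) * ((N - l) - (m - j - 1))) ≤ (l - j) * (m - j) := by
  have hbpos : 0 < b := by omega
  have h16b : 16 * b ≤ k := by omega
  have hαk : 16 * (α * b) ≤ α * k := by
    calc 16 * (α * b) = α * (16 * b) := by ring
    _ ≤ α * k := Nat.mul_le_mul_left α h16b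
  have hq : 2 * α ≤ q + 1 := by
    by_contra hcon
    push_neg at hcon
    have h1 : b * (q + 1) ≤ 2 * (α * b) := by
      calc b * (q + 1) ≤ b * (2 * α) := Nat.mul_le_mul_left b (by omega)
      _ = 2 * (α * b) := by ring
    have e1 : b * (q + 1) = b * q + b := by ring
    omega
  have hm2α : 2 * α ≤ m := by
    have : α * 3 ≤ α * k := Nat.mul_le_mul_left α (by omega)
    omega
  obtain ⟨u, hu⟩ : ∃ u, q + 1 = u + 2 * α := ⟨q + 1 - 2*α, by omega⟩
  obtain ⟨v, hv⟩ : ∃ v, m + 1 = v + 2 * α := ⟨m + 1 - 2*α, by omega⟩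
  have hLHS : 2 * ((j+1) * ((N - l) - (m - j - 1))) ≤ 4 * α * N := by
    have h1 : (j + 1) ≤ 2 * α := by omega
    have h2 : (N - l) - (m - j - 1) ≤ N := by omega
    calc 2 * ((j+1) * ((N - l) - (m - j - 1))) ≤ 2 * (2 * α * N) :=
          Nat.mul_le_mul_left 2 (Nat.mul_le_mul h1 h2)
      _ = 4 * α * N := by ring
  have hRHS : u * v ≤ (l - j) * (m - j) := Nat.mul_le_mul (by omega) (by omega)
  have hmain : 4 * α * N ≤ u * v := by
    have e1 : b * q + b = b * u + 2 * (α * b) := by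
      calc b * q + b = b * (q + 1) := by ring
      _ = b * (u + 2 * α) := by rw [hu]
      _ = b * u + 2 * (α * b) := by ring
    have hbu' : N + 1 ≤ b * u + 2 * (α * b) := by omega
    have h16ab' : 16 * (α * b) ≤ N + 1 := by omega
    have hv' : v + 2 * α = α * k := by omega
    have key := key_int N k α b u v (by exact_mod_cast hbpos) (by exact_mod_cast hα)
      (by exact_mod_cast hk) (by exact_mod_cast h16b)
      (by have : (N:ℤ) + 1 ≤ (b:ℤ)*u + 2*((α:ℤ)*(b:ℤ)) := by exact_mod_cast hbu'
          linarith)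
      (by exact_mod_cast h16ab') (by exact_mod_cast hv')
      (by positivity) (by positivity) (by positivity)
    exact_mod_cast key
  omega

lemma block_bad (N m α l : ℕ) (B : Finset ℕ) (hB : B ⊆ Finset.Icc 1 N) (hl : B.card = l)
    (hα : 1 ≤ α) (h2α : 2*α ≤ m) (hla : 2*α ≤ l)
    (hKEY : ∀ j < 2*α, 2*((j+1) * ((N - l) - (m - j - 1))) ≤ (l - j)*(m - j)) :
    2^(α-1) * (((Finset.Icc 1 N).powersetCard m).filter (fun S => (S ∩ B).card ≤ α)).card
      ≤ N.choose m := by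
  set P := (Finset.Icc 1 N).powersetCard m with hP
  set T : ℕ → ℕ := fun j => l.choose j * (N - l).choose (m - j) with hT
  have hcardIcc : (Finset.Icc 1 N).card = N := by rw [Nat.card_Icc]; omega
  have hcardsdiff : (Finset.Icc 1 N \ B).card = N - l := by
    rw [Finset.card_sdiff_of_subset hB, hcardIcc, hl]
  have hcount : ∀ j, j ≤ m → (P.filter fun S => (S ∩ B).card = j).card = T j := by
    intro j hj
    rw [hP, count_inter _ _ hB _ _ hj, hl, hcardsdiff]
  have hratio : ∀ j < 2*α, 2 * T j ≤ T (j+1) := by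
    intro j hj
    have : m - (j+1) = m - j - 1 := by omega
    simp only [hT, this]
    exact ratio_step l (N - l) m j (by omega) (by omega) (hKEY j hj)
  -- bad count as sum of fibers
  have hfib : ((P.filter (fun S => (S ∩ B).card ≤ α)).card : ℕ)
      ≤ ∑ j ∈ Finset.range (α+1), T j := by
    rw [Finset.card_eq_sum_card_fiberwise
      (f := fun S => (S ∩ B).card) (t := Finset.range (α+1))
      (fun S hS => Finset.mem_range.2 (by
        simpa using Nat.lt_succ_of_le (Finset.mem_filter.1 hS).2))]
    apply Finset.sum_le_sum
    intro j hj
    have hjα : j ≤ α := by have := Finset.mem_range.1 hj; omega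
    rw [Finset.filter_filter]
    calc (P.filter fun S => (S ∩ B).card ≤ α ∧ (S ∩ B).card = j).card
        ≤ (P.filter fun S => (S ∩ B).card = j).card := by
          apply Finset.card_le_card
          exact Finset.monotone_filter_right P (fun S _ h => h.2)
      _ = T j := hcount j (by omega)
  have hsum : ∑ j ∈ Finset.range (α+1), T j ≤ 2 * T α :=
    doubling_sum hratio α (by omega)
  have hpow : 2^α * T α ≤ T (2*α) := by
    have := doubling_pow hratio α α (by omega)
    rwa [show α + α = 2*α by ring] at this
  have htop : T (2*α) ≤ N.choose m := by
    rw [← hcount (2*α) h2α]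
    calc (P.filter fun S => (S ∩ B).card = 2*α).card ≤ P.card :=
          Finset.card_le_card (Finset.filter_subset _ _)
      _ = N.choose m := by rw [hP, Finset.card_powersetCard, hcardIcc]
  calc 2^(α-1) * (P.filter (fun S => (S ∩ B).card ≤ α)).card
      ≤ 2^(α-1) * (2 * T α) := Nat.mul_le_mul_left _ (hfib.trans hsum)
    _ = 2^(α-1) * 2 * T α := by ring
    _ = 2^α * T α := by rw [← pow_succ, Nat.sub_add_cancel hα]
    _ ≤ T (2*α) := hpow
    _ ≤ N.choose m := htop

lemma det_lemma (N k α b : ℕ) (S : Finset ℕ)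
    (hS : S ⊆ Finset.Icc 1 N) (hcard : S.card = α * k - 1)
    (hk : 2 ≤ k) (hα : 2 ≤ α) (hkN : α * k - 1 ≤ N)
    (hb : 1 ≤ b) (hkb : k ≤ 32 * b) (hbN : b ≤ N)
    (hGood : ∀ t < b, α + 1 ≤ (S ∩ Finset.Ioc (t * N / b) ((t+1) * N / b)).card)
    (i : ℕ) (hi1 : 1 ≤ i) (hik : i ≤ k) :
    ((Finset.Icc 1 N).filter fun v => pivot N k α S (i-1) < v ∧ v ≤ pivot N k α S i).card * k
      ≤ 128 * N := by
  obtain ⟨i, rfl⟩ : ∃ i', i = i' + 1 := ⟨i - 1, by omega⟩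
  have hm : 0 < α * k - 1 := by
    have h4 : 4 ≤ α * k := by nlinarith
    omega
  have hmN : α * k - 1 ≤ N := hkN
  have hNpos : 0 < N := by omega
  set m := α * k - 1 with hmdef
  set L := S.sort (· ≤ ·) with hL
  have hlen : L.length = m := by rw [hL, Finset.length_sort, hcard]
  have hsorted : L.SortedLT := Finset.sortedLT_sort S
  have hmono : StrictMono L.get := hsorted.strictMono_get
  -- pivot value facts
  have hpivmem : ∀ j, 1 ≤ j → j ≤ k - 1 → pivot N k α S j ∈ S := by
    intro j hj1 hjk
    have hne0 : j ≠ 0 := by omega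
    have hnek : j ≠ k := by omega
    have hidx : j * α - 1 < L.length := by
      rw [hlen]
      have : j * α ≤ (k-1) * α := Nat.mul_le_mul_right α hjk
      have h2 : (k-1) * α + α = k * α := by
        have : k - 1 + 1 = k := by omega
        calc (k-1) * α + α = (k - 1 + 1) * α := by ring
        _ = k * α := by rw [this]
      have h3 : 1 ≤ j * α := by nlinarith
      have h4 : k * α = α * k := by ring
      omega
    rw [pivot, if_neg hne0, if_neg hnek, ← hL, List.getD_eq_getElem L 0 hidx]
    have : L[j * α - 1] ∈ L := List.getElem_mem hidx
    exact (Finset.mem_sort (α := ℕ) (· ≤ ·)).1 this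
  have hptop : ∀ j, j ≤ k → pivot N k α S j ≤ N := by
    intro j hj
    by_cases h0 : j = 0
    · simp [pivot, h0]
    by_cases hkk : j = k
    · rw [pivot, if_neg (by omega : ¬ j = 0), if_pos hkk]
    have := hpivmem j (by omega) (by omega)
    exact (Finset.mem_Icc.1 (hS this)).2
  -- rank function
  set R : ℕ → ℕ := fun v => (S.filter (· ≤ v)).card with hR
  have hrank : ∀ j, 1 ≤ j → j ≤ k - 1 → R (pivot N k α S j) = j * α := by
    intro j hj1 hjk
    have hne0 : j ≠ 0 := by omega
    have hnek : j ≠ k := by omega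
    have hidx : j * α - 1 < S.card := by
      rw [hcard]
      have : j * α ≤ (k-1) * α := Nat.mul_le_mul_right α hjk
      have h2 : (k-1) * α + α = k * α := by
        have hh : k - 1 + 1 = k := by omega
        calc (k-1) * α + α = (k - 1 + 1) * α := by ring
        _ = k * α := by rw [hh]
      have h3 : 1 ≤ j * α := by nlinarith
      have h4 : k * α = α * k := by ring
      omega
    have := rank_sort S (j * α - 1) hidx
    rw [pivot, if_neg hne0, if_neg hnek]
    rw [hR]
    simp only []
    rw [this]
    have : 1 ≤ j * α := by nlinarith
    omega
  have hR0 : R (pivot N k α S 0) = 0 := by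
    rw [pivot, if_pos rfl, hR]
    simp only []
    rw [Finset.card_eq_zero]
    refine Finset.eq_empty_of_forall_notMem fun x hx => ?_
    have h1 := Finset.mem_filter.1 hx
    have := (Finset.mem_Icc.1 (hS h1.1)).1
    omega
  have hRtop : ∀ v, R v ≤ m := fun v => by
    rw [hR, ← hcard]; exact Finset.card_le_card (Finset.filter_subset _ _)
  -- pivot monotone (adjacent)
  have hpmono : pivot N k α S i ≤ pivot N k α S (i+1) := by
    by_cases h0 : i = 0
    · subst h0; rw [pivot, if_pos rfl]; omega
    by_cases hkk : i + 1 = k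
    · rw [(by rw [pivot, if_neg (by omega), if_pos hkk] : pivot N k α S (i+1) = N)]
      exact hptop i (by omega)
    -- both are sort entries
    have hidx : ∀ j, 1 ≤ j → j ≤ k - 1 → j * α - 1 < L.length := by
      intro j hj1 hjk
      rw [hlen]
      have : j * α ≤ (k-1) * α := Nat.mul_le_mul_right α hjk
      have h2 : (k-1) * α + α = k * α := by
        have hh : k - 1 + 1 = k := by omega
        calc (k-1) * α + α = (k - 1 + 1) * α := by ring
        _ = k * α := by rw [hh]
      have h3 : 1 ≤ j * α := by nlinarith
      have h4 : k * α = α * k := by ring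
      omega
    have hi1' := hidx i (by omega) (by omega)
    have hi2' := hidx (i+1) (by omega) (by omega)
    rw [pivot, pivot, if_neg h0, if_neg (by omega : ¬ i = k), if_neg (by omega : ¬ i + 1 = 0),
      if_neg hkk, ← hL, List.getD_eq_getElem L 0 hi1', List.getD_eq_getElem L 0 hi2']
    have : (⟨i * α - 1, hi1'⟩ : Fin L.length) ≤ ⟨(i+1) * α - 1, hi2'⟩ := by
      simp only [Fin.mk_le_mk]
      have : i * α ≤ (i+1) * α := Nat.mul_le_mul_right α (by omega)
      omega
    exact hmono.monotone this
  -- count of sample points in the bucket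
  have hScount : (S.filter fun x => pivot N k α S i < x ∧ x ≤ pivot N k α S (i+1)).card ≤ α := by
    set p0 := pivot N k α S i with hp0
    set p1 := pivot N k α S (i+1) with hp1
    have hdisj : Disjoint (S.filter fun x => p0 < x ∧ x ≤ p1) (S.filter (· ≤ p0)) := by
      refine Finset.disjoint_left.2 fun x hx hx' => ?_
      have := (Finset.mem_filter.1 hx).2
      have := (Finset.mem_filter.1 hx').2
      omega
    have hsub : (S.filter fun x => p0 < x ∧ x ≤ p1) ∪ (S.filter (· ≤ p0))
        ⊆ S.filter (· ≤ p1) := by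
      intro x hx
      rcases Finset.mem_union.1 hx with h | h
      · have := Finset.mem_filter.1 h
        exact Finset.mem_filter.2 ⟨this.1, by omega⟩
      · have := Finset.mem_filter.1 h
        exact Finset.mem_filter.2 ⟨this.1, le_trans this.2 hpmono⟩
    have hcards := Finset.card_le_card hsub
    rw [Finset.card_union_of_disjoint hdisj] at hcards
    -- R p1 ≤ (i+1)*α and R p0 = i*α
    have hup : R p1 ≤ (i+1) * α := by
      by_cases hkk : i + 1 = k
      · have h5 : (i+1) * α = α * k := by rw [hkk]; ring
        have h6 := hRtop p1
        omega
      · rw [hp1]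
        exact (hrank (i+1) (by omega) (by omega)).le
    have hlow : R p0 = i * α := by
      by_cases h0 : i = 0
      · subst h0; simpa using hR0
      · rw [hp0]
        exact hrank i (by omega) (by omega)
    have e1 : (i+1) * α = i * α + α := by ring
    have hRp0 : (S.filter (· ≤ p0)).card = R p0 := rfl
    have hRp1 : (S.filter (· ≤ p1)).card = R p1 := rfl
    omega
  -- gap bound
  set q := N / b with hq
  have hstep : ∀ t : ℕ, (t+1) * N / b ≤ t * N / b + q + 1 := by
    intro t
    have := (nat_add_div_le (t * N) N b (by omega)).2
    have e : (t+1) * N = t * N + N := by ring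
    rw [e]
    omega
  have hgap : pivot N k α S (i+1) ≤ pivot N k α S i + 2*q + 2 := by
    by_contra hcon
    push_neg at hcon
    set a := pivot N k α S i with ha
    have haN : a ≤ N := hptop i (by omega)
    have hpN : pivot N k α S (i+1) ≤ N := hptop (i+1) (by omega)
    have hx1 : a + 1 ≤ N := by omega
    obtain ⟨t, htb, ht1, ht2⟩ := discrete_ivt (fun t => t * N / b) (a+1) b
      (by simp) (by
        have : b * N / b = N := by rw [Nat.mul_div_cancel_left N (by omega : 0 < b)]
        beta_reduce
        omega)
    -- block t+1
    have hup2 : (t+1+1) * N / b ≤ t * N / b + 2*q + 2 := by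
      have := hstep t
      have := hstep (t+1)
      omega
    have htb2 : t + 1 < b := by
      by_contra hcon2
      push_neg at hcon2
      have : b * N / b ≤ (t+1) * N / b :=
        Nat.div_le_div_right (Nat.mul_le_mul_right N (by omega))
      rw [Nat.mul_div_cancel_left N (by omega : 0 < b)] at this
      have h6 := hstep t
      omega
    have hblock := hGood (t+1) htb2
    have hsub2 : S ∩ Finset.Ioc ((t+1) * N / b) ((t+1+1) * N / b)
        ⊆ S.filter fun x => a < x ∧ x ≤ pivot N k α S (i+1) := by
      intro x hx
      obtain ⟨hxS, hxI⟩ := Finset.mem_inter.1 hx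
      have hxI' := Finset.mem_Ioc.1 hxI
      refine Finset.mem_filter.2 ⟨hxS, ?_, ?_⟩ <;> omega
    have := Finset.card_le_card hsub2
    omega
  -- bucket in interval
  have hbucket : ((Finset.Icc 1 N).filter fun v =>
      pivot N k α S i < v ∧ v ≤ pivot N k α S (i+1)).card
      ≤ 2*q + 2 := by
    have hsub3 : ((Finset.Icc 1 N).filter fun v =>
        pivot N k α S i < v ∧ v ≤ pivot N k α S (i+1))
        ⊆ Finset.Ioc (pivot N k α S i) (pivot N k α S (i+1)) := by
      intro x hx
      have := (Finset.mem_filter.1 hx).2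
      exact Finset.mem_Ioc.2 this
    calc ((Finset.Icc 1 N).filter fun v =>
        pivot N k α S i < v ∧ v ≤ pivot N k α S (i+1)).card
        ≤ (Finset.Ioc (pivot N k α S i) (pivot N k α S (i+1))).card :=
          Finset.card_le_card hsub3
      _ = pivot N k α S (i+1) - pivot N k α S i := Nat.card_Ioc _ _
      _ ≤ 2*q + 2 := by omega
  -- final arithmetic
  have hbq' : b * q ≤ N := by
    rw [hq]; exact Nat.mul_div_le N b
  calc ((Finset.Icc 1 N).filter fun v =>
      pivot N k α S (i+1-1) < v ∧ v ≤ pivot N k α S (i+1)).card * k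
      ≤ (2*q+2) * k := by
        apply Nat.mul_le_mul_right
        simpa using hbucket
    _ ≤ (2*q+2) * (32*b) := Nat.mul_le_mul_left _ hkb
    _ = 64 * (b * q) + 64 * b := by ring
    _ ≤ 64 * N + 64 * N := by
        have := Nat.mul_le_mul_left 64 hbq'
        have := Nat.mul_le_mul_left 64 hbN
        omega
    _ = 128 * N := by ring

lemma final_count {γ : Type} (P : Finset γ) (p q : γ → Prop) [DecidablePred p]
    (iq : DecidablePred q)
    (r : ℕ) (hr : 0 < r) (h : ∀ S ∈ P, ¬ p S → q S)
    (hbad : (P.filter p).card * r ≤ P.card) :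
    (1 - 1/(r:ℝ)) * (P.card : ℝ) ≤ ((@Finset.filter γ q iq P).card : ℝ) := by
  letI := iq
  have hsub : P.filter (fun S => ¬ p S) ⊆ P.filter q := by
    intro S hS
    obtain ⟨h1, h2⟩ := Finset.mem_filter.1 hS
    exact Finset.mem_filter.2 ⟨h1, h S h1 h2⟩
  have hsplit := Finset.card_filter_add_card_filter_not (s := P) (p := p)
  have hcards := Finset.card_le_card hsub
  have hG : P.card ≤ (P.filter q).card + (P.filter p).card := by omega
  have hr0' : (0:ℝ) < r := by exact_mod_cast hr
  have h1R : ((P.filter p).card : ℝ) ≤ (P.card : ℝ) / r := by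
    rw [le_div_iff₀ hr0']; exact_mod_cast hbad
  have h2R : (P.card:ℝ) ≤ ((P.filter q).card:ℝ) + ((P.filter p).card:ℝ) := by
    exact_mod_cast hG
  have heq : (1 - 1/(r:ℝ)) * P.card = P.card - P.card/r := by ring
  rw [heq]
  linarith

/-- Oversampling lemma: there are absolute constants `C, c ≥ 1` such that for all integers
`N, k, α, r` with `k ≥ 2`, `r ≥ 2`, `α ≥ C·ln(k·r)` and `α·k - 1 ≤ N`, a uniformly random
subset `S` of `{1,…,N}` of size `α·k - 1` has the following property with probability at
least `1 - 1/r` (stated by counting subsets): every bucket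
`B i = {v ∈ {1,…,N} : s (i-1) < v ≤ s i}`, `i = 1,…,k`, determined by the equidistant
pivots of the sorted sample, has size at most `c·N/k`. -/
theorem stmt_0 :
    ∃ C c : ℝ, 1 ≤ C ∧ 1 ≤ c ∧
      ∀ N k α r : ℕ, 2 ≤ k → 2 ≤ r →
        C * Real.log ((k : ℝ) * (r : ℝ)) ≤ (α : ℝ) → α * k - 1 ≤ N →
        (1 - 1 / (r : ℝ)) * (((Finset.Icc 1 N).powersetCard (α * k - 1)).card : ℝ) ≤
          ((((Finset.Icc 1 N).powersetCard (α * k - 1)).filter fun S =>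
              ∀ i ∈ Finset.Icc 1 k,
                ((((Finset.Icc 1 N).filter fun v =>
                      pivot N k α S (i - 1) < v ∧ v ≤ pivot N k α S i).card : ℝ)
                  ≤ c * (N : ℝ) / (k : ℝ))).card : ℝ) := by
  refine ⟨6, 128, by norm_num, by norm_num, ?_⟩
  intro N k α r hk hr hα hN
  have hk0 : 0 < k := by omega
  have hr0 : 0 < r := by omega
  have hkr4 : (4:ℝ) ≤ (k:ℝ) * r := by
    have h1 : (2:ℝ) ≤ (k:ℝ) := by exact_mod_cast hk
    have h2 : (2:ℝ) ≤ (r:ℝ) := by exact_mod_cast hr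
    nlinarith
  have hkrpos : (0:ℝ) < (k:ℝ) * r := by nlinarith
  have hlog2 : (0.6931471803:ℝ) < Real.log 2 := Real.log_two_gt_d9
  have hlog4eq : Real.log 4 = 2 * Real.log 2 := by
    rw [show (4:ℝ) = 2^2 by norm_num, Real.log_pow]; push_cast; ring
  have hlogkr : (1.386:ℝ) ≤ Real.log ((k:ℝ)*r) := by
    have h4 : Real.log 4 ≤ Real.log ((k:ℝ)*r) := Real.log_le_log (by norm_num) hkr4
    nlinarith
  have hα9 : 9 ≤ α := by
    by_contra hcon
    push_neg at hcon
    have h8 : (α:ℝ) ≤ 8 := by exact_mod_cast (by omega : α ≤ 8)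
    nlinarith
  have hpow : k * r ≤ 2^(α-1) := by
    have hc1 : ((α - 1 : ℕ):ℝ) = (α:ℝ) - 1 := by
      have : 1 ≤ α := by omega
      push_cast [this]; ring
    have h1 : Real.log ((k:ℝ)*r) ≤ ((α - 1 : ℕ):ℝ) * Real.log 2 := by
      rw [hc1]
      nlinarith
    have h2 : ((k*r : ℕ):ℝ) ≤ ((2^(α-1) : ℕ):ℝ) := by
      push_cast
      calc (k:ℝ)*r = Real.exp (Real.log ((k:ℝ)*r)) := (Real.exp_log hkrpos).symm
      _ ≤ Real.exp (((α-1:ℕ):ℝ) * Real.log 2) := Real.exp_le_exp.2 h1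
      _ = (2:ℝ)^(α-1:ℕ) := by rw [← Real.log_pow, Real.exp_log (by positivity)]
    exact_mod_cast h2
  set m := α * k - 1 with hmdef
  have hm1 : m + 1 = α * k := by
    have : 9 * 2 ≤ α * k := Nat.mul_le_mul hα9 hk
    omega
  obtain ⟨b, hbdef⟩ : ∃ b, b = (k+31)/32 := ⟨_, rfl⟩
  have hb1 : 1 ≤ b := by omega
  have hkb : k ≤ 32 * b := by omega
  have hb32 : 32 * b ≤ k + 31 := by omega
  have hbk : b ≤ k := by omega
  have hkN : k ≤ N := by
    have : 2 * k ≤ α * k := Nat.mul_le_mul_right k (by omega)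
    omega
  set P := (Finset.Icc 1 N).powersetCard m with hPdef
  have hX : P.card = N.choose m := by
    rw [hPdef, Finset.card_powersetCard, Nat.card_Icc]
    norm_num
  set blk : ℕ → Finset ℕ := fun t => Finset.Ioc (t * N / b) ((t+1) * N / b) with hblk
  set badp : Finset ℕ → Prop :=
    fun S => ∃ t ∈ Finset.range b, (S ∩ blk t).card ≤ α with hbadp
  have hperblock : ∀ t, t < b →
      2^(α-1) * (P.filter (fun S => (S ∩ blk t).card ≤ α)).card ≤ N.choose m := by
    intro t htb
    by_cases hk33 : 33 ≤ k
    · have hbpos : 0 < b := hb1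
      obtain ⟨q, hq⟩ : ∃ q, q = N / b := ⟨_, rfl⟩
      have hbq1 : b * q ≤ N := by rw [hq]; exact Nat.mul_div_le N b
      have hbq2 : N < b * q + b := by
        rw [hq]
        have h1 := Nat.div_add_mod N b
        have h2 := Nat.mod_lt N hbpos
        omega
      have hblkt : blk t = Finset.Ioc (t * N / b) ((t+1) * N / b) := by rw [hblk]
      have hblkIcc : blk t ⊆ Finset.Icc 1 N := by
        rw [hblkt]
        intro x hx
        have hx' := Finset.mem_Ioc.1 hx
        have hub : (t+1) * N / b ≤ N := by
          calc (t+1) * N / b ≤ b * N / b :=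
                Nat.div_le_div_right (Nat.mul_le_mul_right N (by omega : t + 1 ≤ b))
          _ = N := Nat.mul_div_cancel_left N hbpos
        exact Finset.mem_Icc.2 ⟨Nat.lt_of_le_of_lt (Nat.zero_le _) hx'.1, le_trans hx'.2 hub⟩
      have hl : (blk t).card = (t+1) * N / b - t * N / b := by
        rw [hblkt]; exact Nat.card_Ioc _ _
      have hql : q ≤ (blk t).card := by
        have h1 := (nat_add_div_le (t*N) N b hbpos).1
        have e2 : (t+1) * N / b = (t*N + N) / b := by
          congr 1; ring
        omega
      have h16b : 16 * b ≤ k := by omega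
      have h16ab : 16 * (α*b) ≤ α * k := by
        calc 16 * (α*b) = α * (16*b) := by ring
        _ ≤ α * k := Nat.mul_le_mul_left α h16b
      have e5 : (16*α - 1) * b + b = 16 * (α*b) := by
        have h9 : (16*α - 1) + 1 = 16*α := by omega
        calc (16*α-1)*b + b = ((16*α-1)+1)*b := by ring
        _ = (16*α)*b := by rw [h9]
        _ = 16*(α*b) := by ring
      have hq16 : 16*α - 1 ≤ q := by
        rw [hq]
        refine (Nat.le_div_iff_mul_le hbpos).2 ?_
        omega
      have h2α : 2*α ≤ m := by
        have : α * 33 ≤ α * k := Nat.mul_le_mul_left α hk33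
        omega
      have hla : 2*α ≤ (blk t).card := by omega
      have hKEY : ∀ j, j < 2*α → 2*((j+1) * ((N - (blk t).card) - (m - j - 1)))
          ≤ ((blk t).card - j)*(m - j) :=
        fun j hj => key_arith N k α b q ((blk t).card) m j hm1 hα9 hk33 hb32 hkb
          hbq1 hbq2 hN hql hj
      exact block_bad N m α ((blk t).card) (blk t) hblkIcc rfl (by omega) h2α hla hKEY
    · have hb1' : b = 1 := by omega
      have ht0 : t = 0 := by omega
      have hempty : P.filter (fun S => (S ∩ blk t).card ≤ α) = ∅ := by
        refine Finset.filter_eq_empty_iff.2 fun {S} hS => ?_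
        have hSsub := (Finset.mem_powersetCard.1 hS).1
        have hScard := (Finset.mem_powersetCard.1 hS).2
        have hblkt : blk t = Finset.Ioc 0 N := by
          rw [hblk]
          show Finset.Ioc (t * N / b) ((t+1) * N / b) = Finset.Ioc 0 N
          rw [ht0, hb1']
          norm_num
        have hblkeq : S ∩ blk t = S := by
          refine Finset.inter_eq_left.2 fun x hx => ?_
          have hx' := Finset.mem_Icc.1 (hSsub hx)
          rw [hblkt]
          exact Finset.mem_Ioc.2 ⟨by omega, by omega⟩
        rw [hblkeq, hScard]
        have : α * 2 ≤ α * k := Nat.mul_le_mul_left α hk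
        omega
      rw [hempty]
      simp
  -- union bound
  have hbadcard : 2^(α-1) * (P.filter badp).card ≤ b * N.choose m := by
    have hsub : P.filter badp ⊆ (Finset.range b).biUnion
        (fun t => P.filter (fun S => (S ∩ blk t).card ≤ α)) := by
      intro S hS
      obtain ⟨hSP, hbad⟩ := Finset.mem_filter.1 hS
      obtain ⟨t, htb, hcard⟩ := hbad
      exact Finset.mem_biUnion.2 ⟨t, htb, Finset.mem_filter.2 ⟨hSP, hcard⟩⟩
    calc 2^(α-1) * (P.filter badp).card
        ≤ 2^(α-1) * ∑ t ∈ Finset.range b,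
            (P.filter (fun S => (S ∩ blk t).card ≤ α)).card :=
          Nat.mul_le_mul_left _ (le_trans (Finset.card_le_card hsub) Finset.card_biUnion_le)
      _ = ∑ t ∈ Finset.range b,
            2^(α-1) * (P.filter (fun S => (S ∩ blk t).card ≤ α)).card := by
          rw [Finset.mul_sum]
      _ ≤ ∑ _t ∈ Finset.range b, N.choose m :=
          Finset.sum_le_sum (fun t ht => hperblock t (Finset.mem_range.1 ht))
      _ = b * N.choose m := by
          rw [Finset.sum_const, Finset.card_range, smul_eq_mul]
  have hbadr : (P.filter badp).card * r ≤ N.choose m := by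
    have h1 : r * b ≤ 2^(α-1) := by
      calc r * b ≤ r * k := Nat.mul_le_mul_left r hbk
      _ = k * r := by ring
      _ ≤ 2^(α-1) := hpow
    have h2 : 2^(α-1) * ((P.filter badp).card * r) ≤ 2^(α-1) * (N.choose m) := by
      calc 2^(α-1) * ((P.filter badp).card * r)
          = r * (2^(α-1) * (P.filter badp).card) := by ring
        _ ≤ r * (b * N.choose m) := Nat.mul_le_mul_left r hbadcard
        _ = (r*b) * N.choose m := by ring
        _ ≤ 2^(α-1) * N.choose m := Nat.mul_le_mul_right _ h1
    exact Nat.le_of_mul_le_mul_left h2 (by positivity)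
  -- deterministic part
  refine final_count P badp _ _ r hr0 ?_ ?_
  · intro S hSP hnb
    intro i hi
    obtain ⟨hi1, hik⟩ := Finset.mem_Icc.1 hi
    have hSsub := (Finset.mem_powersetCard.1 hSP).1
    have hScard := (Finset.mem_powersetCard.1 hSP).2
    have hGood : ∀ t, t < b → α + 1 ≤ (S ∩ Finset.Ioc (t * N / b) ((t+1) * N / b)).card := by
      intro t htb
      by_contra hc
      push_neg at hc
      refine hnb ⟨t, Finset.mem_range.2 htb, ?_⟩
      have hblkt : blk t = Finset.Ioc (t * N / b) ((t+1) * N / b) := by rw [hblk]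
      rw [hblkt]
      omega
    have hdet := det_lemma N k α b S hSsub hScard hk (by omega) hN hb1 hkb
      (le_trans hbk hkN) hGood i hi1 hik
    have hk0' : (0:ℝ) < (k:ℝ) := by exact_mod_cast hk0
    rw [le_div_iff₀ hk0']
    exact_mod_cast hdet
  · rw [hX]
    exact hbadr
end

section
/- Let d ≥ 1 be an integer and k = 2^d. For j ∈ {1,…,k−1} let ℓ(j) = ⌊log₂ j⌋ and define index(j) = (2(j − 2^{ℓ(j)}) + 1)·2^{d − ℓ(j) − 1}. Then: (a) index is a bijection from {1,…,k−1} to {1,…,k−1}; and (b) for every j ∈ {1,…,k−1}, the set {index(j') : j' ∈ {1,…,k−1} and ⌊j'/2^q⌋ = j for some integer q ≥ 0} is exactly the set of integers m with index(j) − 2^{d−ℓ(j)−1} < m < index(j) + 2^{d−ℓ(j)−1}. -/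
private lemma log2_pow_add {ℓ r : ℕ} (hr : r < 2 ^ ℓ) : Nat.log 2 (2 ^ ℓ + r) = ℓ := by
  refine Nat.log_eq_of_pow_le_of_lt_pow (Nat.le_add_right _ _) ?_
  have : 2 ^ (ℓ + 1) = 2 ^ ℓ + 2 ^ ℓ := by rw [pow_succ]; ring
  omega

private lemma exists_odd_decomp : ∀ m : ℕ, 1 ≤ m → ∃ u e, m = (2 * u + 1) * 2 ^ e := by
  intro m
  induction m using Nat.strong_induction_on with
  | _ m ih =>
    intro hm
    rcases Nat.even_or_odd m with he | ho
    · obtain ⟨m', hm'⟩ := he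
      obtain ⟨u, e, h⟩ := ih m' (by omega) (by omega)
      exact ⟨u, e + 1, by rw [pow_succ, hm', h]; ring⟩
    · obtain ⟨u, hu⟩ := ho
      exact ⟨u, 0, by simpa using hu⟩

private lemma odd_decomp_inj : ∀ e f u v : ℕ,
    (2 * u + 1) * 2 ^ e = (2 * v + 1) * 2 ^ f → e = f ∧ u = v := by
  intro e
  induction e with
  | zero =>
    intro f u v h
    cases f with
    | zero => simp at h; omega
    | succ f' =>
      exfalso
      have h2 : 2 ∣ (2 * v + 1) * 2 ^ (f' + 1) :=
        Dvd.dvd.mul_left ⟨2 ^ f', by rw [pow_succ]; ring⟩ _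
      rw [← h] at h2
      simp only [pow_zero, mul_one] at h2
      omega
  | succ e' ih =>
    intro f u v h
    cases f with
    | zero =>
      exfalso
      have h2 : 2 ∣ (2 * u + 1) * 2 ^ (e' + 1) :=
        Dvd.dvd.mul_left ⟨2 ^ e', by rw [pow_succ]; ring⟩ _
      rw [h] at h2
      simp only [pow_zero, mul_one] at h2
      omega
    | succ f' =>
      have h' : (2 * u + 1) * 2 ^ e' * 2 = (2 * v + 1) * 2 ^ f' * 2 := by
        rw [pow_succ, pow_succ, ← mul_assoc, ← mul_assoc] at h
        exact h
      have := ih f' u v (Nat.eq_of_mul_eq_mul_right (by norm_num) h')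
      omega

/-- Correctness of the breadth-first (heap) layout of the `k - 1 = 2^d - 1` pivots in the
complete binary search tree of super scalar samplesort: with `ℓ j = ⌊log₂ j⌋` and
`index j = (2(j - 2^(ℓ j)) + 1)·2^(d - ℓ j - 1)`,
(a) `index` is a bijection of `{1,…,k-1}` onto itself, and
(b) for every node `j ∈ {1,…,k-1}`, the indices stored in the subtree rooted at `j`
(the nodes `j'` with `⌊j'/2^q⌋ = j` for some `q ≥ 0`) are exactly the integers `m` with
`index j - 2^(d - ℓ j - 1) < m < index j + 2^(d - ℓ j - 1)`. -/
theorem stmt_2 (d : ℕ) (hd : 1 ≤ d) (k : ℕ) (hk : k = 2 ^ d)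
    (index : ℕ → ℕ)
    (hindex : ∀ j, index j = (2 * (j - 2 ^ Nat.log 2 j) + 1) * 2 ^ (d - Nat.log 2 j - 1)) :
    Set.BijOn index (Set.Icc 1 (k - 1)) (Set.Icc 1 (k - 1)) ∧
      ∀ j ∈ Set.Icc 1 (k - 1),
        {m : ℕ | ∃ j' ∈ Set.Icc 1 (k - 1), (∃ q : ℕ, j' / 2 ^ q = j) ∧ index j' = m} =
          {m : ℕ | index j - 2 ^ (d - Nat.log 2 j - 1) < m ∧
            m < index j + 2 ^ (d - Nat.log 2 j - 1)} := by
  subst hk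
  -- normalized index formula
  have hidx : ∀ ℓ r : ℕ, r < 2 ^ ℓ →
      index (2 ^ ℓ + r) = (2 * r + 1) * 2 ^ (d - ℓ - 1) := by
    intro ℓ r hr
    rw [hindex, log2_pow_add hr, Nat.add_sub_cancel_left]
  -- decomposition of nodes
  have hdec : ∀ j : ℕ, 1 ≤ j → j ≤ 2 ^ d - 1 →
      ∃ ℓ r, ℓ < d ∧ r < 2 ^ ℓ ∧ j = 2 ^ ℓ + r := by
    intro j h1 h2
    have hdpos : 1 ≤ 2 ^ d := Nat.one_le_two_pow
    have hjlt : j < 2 ^ d := by omega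
    refine ⟨Nat.log 2 j, j - 2 ^ Nat.log 2 j, Nat.log_lt_of_lt_pow (by omega) hjlt, ?_, ?_⟩
    · have h3 := Nat.lt_pow_succ_log_self (by norm_num : 1 < 2) j
      have h4 : 2 ^ (Nat.log 2 j + 1) = 2 * 2 ^ Nat.log 2 j := by rw [pow_succ]; ring
      have h5 := Nat.pow_log_le_self 2 (show j ≠ 0 by omega)
      omega
    · have h5 := Nat.pow_log_le_self 2 (show j ≠ 0 by omega)
      omega
  -- part (b)
  have hb : ∀ j ∈ Set.Icc 1 (2 ^ d - 1),
      {m : ℕ | ∃ j' ∈ Set.Icc 1 (2 ^ d - 1), (∃ q : ℕ, j' / 2 ^ q = j) ∧ index j' = m} =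
        {m : ℕ | index j - 2 ^ (d - Nat.log 2 j - 1) < m ∧
          m < index j + 2 ^ (d - Nat.log 2 j - 1)} := by
    intro j hj
    simp only [Set.mem_Icc] at hj
    obtain ⟨ℓ, r, hℓ, hr, rfl⟩ := hdec j hj.1 hj.2
    rw [log2_pow_add hr, hidx ℓ r hr]
    ext m
    simp only [Set.mem_setOf_eq, Set.mem_Icc]
    constructor
    · rintro ⟨j', ⟨hj'1, hj'2⟩, ⟨q, hq⟩, rfl⟩
      -- j' = j * 2^q + s
      have hqpos : 0 < 2 ^ q := Nat.pow_pos (by norm_num)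
      obtain ⟨s, hs, hj'eq⟩ : ∃ s, s < 2 ^ q ∧ j' = (2 ^ ℓ + r) * 2 ^ q + s := by
        refine ⟨j' % 2 ^ q, Nat.mod_lt _ hqpos, ?_⟩
        have key := Nat.div_add_mod j' (2 ^ q)
        rw [hq, mul_comm (2 ^ q) (2 ^ ℓ + r)] at key
        exact key.symm
      have hpow : 2 ^ (ℓ + q) = 2 ^ ℓ * 2 ^ q := pow_add 2 ℓ q
      have hj'eq2 : j' = 2 ^ (ℓ + q) + (r * 2 ^ q + s) := by
        rw [hj'eq, hpow]; ring
      have hrs : r * 2 ^ q + s < 2 ^ (ℓ + q) := by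
        rw [hpow]
        have h1 : r * 2 ^ q + 2 ^ q ≤ 2 ^ ℓ * 2 ^ q :=
          by calc r * 2 ^ q + 2 ^ q = (r + 1) * 2 ^ q := by ring
            _ ≤ 2 ^ ℓ * 2 ^ q := Nat.mul_le_mul_right _ (by omega)
        omega
      -- ℓ + q < d
      have hltd : ℓ + q < d := by
        have h1 : 2 ^ (ℓ + q) ≤ j' := by omega
        have h2 : 1 ≤ 2 ^ d := Nat.one_le_two_pow
        have h3 : 2 ^ (ℓ + q) < 2 ^ d := by omega
        exact (Nat.pow_lt_pow_iff_right (by norm_num : 1 < 2)).1 h3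
      rw [hj'eq2, hidx (ℓ + q) _ hrs]
      -- exponent bookkeeping
      set e := d - ℓ - q - 1 with hedef
      have he1 : d - (ℓ + q) - 1 = e := by omega
      have he2 : d - ℓ - 1 = q + e := by omega
      rw [he1, he2, pow_add]
      have expand1 : (2 * (r * 2 ^ q + s) + 1) * 2 ^ e
          = 2 * r * (2 ^ q * 2 ^ e) + (2 * s + 1) * 2 ^ e := by ring
      have expand2 : (2 * r + 1) * (2 ^ q * 2 ^ e)
          = 2 * r * (2 ^ q * 2 ^ e) + 2 ^ q * 2 ^ e := by ring
      rw [expand1, expand2]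
      have hepos : 0 < 2 ^ e := Nat.pow_pos (by norm_num)
      have hb1 : 1 ≤ (2 * s + 1) * 2 ^ e := Nat.one_le_iff_ne_zero.2 (by positivity)
      have hb2 : (2 * s + 1) * 2 ^ e < 2 * (2 ^ q * 2 ^ e) := by
        calc (2 * s + 1) * 2 ^ e < (2 * s + 2) * 2 ^ e := by
              exact (Nat.mul_lt_mul_right hepos).2 (by omega)
          _ ≤ (2 * 2 ^ q) * 2 ^ e := Nat.mul_le_mul_right _ (by omega)
          _ = 2 * (2 ^ q * 2 ^ e) := by ring
      omega
    · rintro ⟨hm1, hm2⟩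
      set c := d - ℓ - 1 with hcdef
      have hceq : d = ℓ + c + 1 := by omega
      have expand2 : (2 * r + 1) * 2 ^ c = 2 * r * 2 ^ c + 2 ^ c := by ring
      rw [expand2] at hm1 hm2
      -- 2*r*2^c < m < 2*r*2^c + 2*2^c, let t := m - 2*r*2^c
      obtain ⟨t, ht1, ht2, hmt⟩ : ∃ t, 1 ≤ t ∧ t < 2 * 2 ^ c ∧ m = 2 * r * 2 ^ c + t := by
        refine ⟨m - 2 * r * 2 ^ c, ?_, ?_, ?_⟩ <;> omega
      obtain ⟨u, e, hte⟩ := exists_odd_decomp t ht1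
      have hec : e ≤ c := by
        by_contra hec
        push_neg at hec
        have h1 : 2 ^ (c + 1) ≤ 2 ^ e := Nat.pow_le_pow_right (by norm_num) (by omega)
        have h2 : 2 ^ e ≤ (2 * u + 1) * 2 ^ e := Nat.le_mul_of_pos_left _ (by omega)
        have h3 : 2 ^ (c + 1) = 2 * 2 ^ c := by rw [pow_succ]; ring
        omega
      set q := c - e with hqdef
      have hcqe : c = q + e := by omega
      have hpowc : 2 ^ c = 2 ^ q * 2 ^ e := by rw [hcqe, pow_add]
      have hepos : 0 < 2 ^ e := Nat.pow_pos (by norm_num)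
      have hqpos : 0 < 2 ^ q := Nat.pow_pos (by norm_num)
      have hu : u < 2 ^ q := by
        -- (2u+1) * 2^e < 2 * 2^q * 2^e
        have h1 : (2 * u + 1) * 2 ^ e < 2 * (2 ^ q * 2 ^ e) := by omega
        have h2 : 2 * (2 ^ q * 2 ^ e) = (2 * 2 ^ q) * 2 ^ e := by ring
        rw [h2] at h1
        have h3 : 2 * u + 1 < 2 * 2 ^ q := lt_of_mul_lt_mul_right h1 (Nat.zero_le _)
        omega
      refine ⟨2 ^ (ℓ + q) + (r * 2 ^ q + u), ?_, ⟨q, ?_⟩, ?_⟩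
      · -- membership in Icc
        have hpow : 2 ^ (ℓ + q) = 2 ^ ℓ * 2 ^ q := pow_add 2 ℓ q
        have hrs : r * 2 ^ q + u < 2 ^ (ℓ + q) := by
          rw [hpow]
          have h1 : r * 2 ^ q + 2 ^ q ≤ 2 ^ ℓ * 2 ^ q := by
            calc r * 2 ^ q + 2 ^ q = (r + 1) * 2 ^ q := by ring
              _ ≤ 2 ^ ℓ * 2 ^ q := Nat.mul_le_mul_right _ (by omega)
          omega
        have hlast : 2 ^ (ℓ + q + 1) ≤ 2 ^ d := Nat.pow_le_pow_right (by norm_num) (by omega)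
        have hsucc : 2 ^ (ℓ + q + 1) = 2 ^ (ℓ + q) + 2 ^ (ℓ + q) := by rw [pow_succ]; ring
        constructor
        · omega
        · omega
      · -- division
        have : 2 ^ (ℓ + q) + (r * 2 ^ q + u) = 2 ^ q * (2 ^ ℓ + r) + u := by
          rw [pow_add]; ring
        rw [this, Nat.mul_add_div hqpos, Nat.div_eq_of_lt hu]
        omega
      · -- index value
        have hrs : r * 2 ^ q + u < 2 ^ (ℓ + q) := by
          rw [pow_add]
          have h1 : r * 2 ^ q + 2 ^ q ≤ 2 ^ ℓ * 2 ^ q := by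
            calc r * 2 ^ q + 2 ^ q = (r + 1) * 2 ^ q := by ring
              _ ≤ 2 ^ ℓ * 2 ^ q := Nat.mul_le_mul_right _ (by omega)
          omega
        rw [hidx (ℓ + q) _ hrs]
        have he1 : d - (ℓ + q) - 1 = e := by omega
        rw [he1, hmt, hte, hpowc]
        ring
  constructor
  · refine ⟨?_, ?_, ?_⟩
    · -- MapsTo
      intro j hj
      simp only [Set.mem_Icc] at hj ⊢
      obtain ⟨ℓ, r, hℓ, hr, rfl⟩ := hdec j hj.1 hj.2
      rw [hidx ℓ r hr]
      have hepos : 0 < 2 ^ (d - ℓ - 1) := Nat.pow_pos (by norm_num)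
      constructor
      · exact Nat.one_le_iff_ne_zero.2 (by positivity)
      · have h1 : (2 * r + 1) * 2 ^ (d - ℓ - 1) + 2 ^ (d - ℓ - 1)
            ≤ (2 * 2 ^ ℓ) * 2 ^ (d - ℓ - 1) := by
          calc (2 * r + 1) * 2 ^ (d - ℓ - 1) + 2 ^ (d - ℓ - 1)
              = (2 * r + 2) * 2 ^ (d - ℓ - 1) := by ring
            _ ≤ (2 * 2 ^ ℓ) * 2 ^ (d - ℓ - 1) := Nat.mul_le_mul_right _ (by omega)
        have h2 : (2 * 2 ^ ℓ) * 2 ^ (d - ℓ - 1) = 2 ^ d := by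
          rw [show (2 : ℕ) * 2 ^ ℓ = 2 ^ (ℓ + 1) by rw [pow_succ]; ring, ← pow_add]
          congr 1
          omega
        omega
    · -- InjOn
      intro j₁ hj₁ j₂ hj₂ heq
      simp only [Set.mem_Icc] at hj₁ hj₂
      obtain ⟨ℓ₁, r₁, hℓ₁, hr₁, rfl⟩ := hdec j₁ hj₁.1 hj₁.2
      obtain ⟨ℓ₂, r₂, hℓ₂, hr₂, rfl⟩ := hdec j₂ hj₂.1 hj₂.2
      rw [hidx ℓ₁ r₁ hr₁, hidx ℓ₂ r₂ hr₂] at heq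
      obtain ⟨he, hu⟩ := odd_decomp_inj _ _ _ _ heq
      have : ℓ₁ = ℓ₂ := by omega
      subst this
      omega
    · -- SurjOn
      intro m hm
      have h1 : (1 : ℕ) ∈ Set.Icc 1 (2 ^ d - 1) := by
        simp only [Set.mem_Icc]
        have : 2 ≤ 2 ^ d := by
          calc (2:ℕ) = 2 ^ 1 := (pow_one 2).symm
            _ ≤ 2 ^ d := Nat.pow_le_pow_right (by norm_num) hd
        omega
      have hset := hb 1 h1
      have hlog1 : Nat.log 2 1 = 0 := Nat.log_one_right 2
      have hidx1 : index 1 = 2 ^ (d - 1) := by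
        rw [hindex, hlog1]
        norm_num
      have hmem : m ∈ {m : ℕ | index 1 - 2 ^ (d - Nat.log 2 1 - 1) < m ∧
          m < index 1 + 2 ^ (d - Nat.log 2 1 - 1)} := by
        simp only [Set.mem_setOf_eq, hlog1, hidx1, Nat.sub_zero]
        simp only [Set.mem_Icc] at hm
        have h2 : 2 ^ (d - 1) + 2 ^ (d - 1) = 2 ^ d := by
          rw [← two_mul, ← pow_succ']
          congr 1
          omega
        omega
      rw [← hset] at hmem
      obtain ⟨j', hj', _, hj'm⟩ := hmem
      exact ⟨j', hj', hj'm⟩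
  · exact hb
end

section
/- Let d ≥ 1 be an integer, k = 2^d, and let s_1 < s_2 < … < s_{k−1} be strictly increasing real numbers. For j ∈ {1,…,k−1} let ℓ(j) = ⌊log₂ j⌋, define index(j) = (2(j − 2^{ℓ(j)}) + 1)·2^{d − ℓ(j) − 1}, and set a_j = s_{index(j)}. For a real number e define j_0 = 1 and j_{m+1} = 2·j_m + (1 if a_{j_m} ≤ e, else 0) for m = 0,…,d−1. Then j_d = k + |{i ∈ {1,…,k−1} : s_i ≤ e}|; in other words, j_d − k is exactly the index i ∈ {0,…,k−1} of the bucket B_i = {x : s_i ≤ x < s_{i+1}} (with the conventions s_0 = −∞ and s_k = +∞) containing e. -/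
attribute [local instance] Classical.propDecidable

/-- Correctness of branch-free element classification in super scalar samplesort.
The `k - 1 = 2^d - 1` strictly increasing pivots `s 1 < … < s (k-1)` are stored in
heap layout `a j = s (index j)` with `index j = (2(j - 2^(ℓ j)) + 1)·2^(d - ℓ j - 1)`,
`ℓ j = ⌊log₂ j⌋`. Starting from `J 0 = 1` and repeatedly setting
`J (m+1) = 2·J m + (1 if a (J m) ≤ e else 0)`, after `d` steps the reached leaf satisfies
`J d = k + |{i ∈ {1,…,k-1} : s i ≤ e}|`, i.e. `J d - k` is the index of the bucket
containing `e` (with respect to `s 0 = -∞`, `s k = +∞`). -/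
theorem stmt_3 (d : ℕ) (hd : 1 ≤ d) (k : ℕ) (hk : k = 2 ^ d)
    (s : ℕ → ℝ) (hs : StrictMonoOn s (Set.Icc 1 (k - 1))) (e : ℝ)
    (index : ℕ → ℕ)
    (hindex : ∀ j, index j = (2 * (j - 2 ^ Nat.log 2 j) + 1) * 2 ^ (d - Nat.log 2 j - 1))
    (a : ℕ → ℝ) (ha : ∀ j, a j = s (index j))
    (J : ℕ → ℕ) (hJ0 : J 0 = 1)
    (hJ : ∀ m < d, J (m + 1) = 2 * J m + if a (J m) ≤ e then 1 else 0) :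
    J d = k + ((Finset.Icc 1 (k - 1)).filter fun i => s i ≤ e).card := by
  set r := ((Finset.Icc 1 (k - 1)).filter fun i => s i ≤ e).card with hr
  have hk2 : 2 ≤ k := by
    rw [hk]
    calc 2 = 2 ^ 1 := by norm_num
    _ ≤ 2 ^ d := Nat.pow_le_pow_right (by norm_num) hd
  have hmono : MonotoneOn s (Set.Icc 1 (k - 1)) := hs.monotoneOn
  have hrle : r ≤ k - 1 := by
    have h1 := Finset.card_filter_le (Finset.Icc 1 (k - 1)) (fun i => s i ≤ e)
    have h2 : (Finset.Icc 1 (k - 1)).card = k - 1 := by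
      rw [Nat.card_Icc]; omega
    omega
  have key : ∀ i, 1 ≤ i → i ≤ k - 1 → (s i ≤ e ↔ i ≤ r) := by
    intro i h1 h2
    constructor
    · intro hse
      have hsub : Finset.Icc 1 i ⊆ (Finset.Icc 1 (k - 1)).filter (fun i => s i ≤ e) := by
        intro j hj
        simp only [Finset.mem_Icc] at hj
        simp only [Finset.mem_filter, Finset.mem_Icc]
        refine ⟨⟨hj.1, hj.2.trans h2⟩, ?_⟩
        exact le_trans (hmono ⟨hj.1, hj.2.trans h2⟩ ⟨h1, h2⟩ hj.2) hse
      have hc := Finset.card_le_card hsub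
      rw [Nat.card_Icc] at hc
      omega
    · intro hir
      by_contra hse
      have hsub : (Finset.Icc 1 (k - 1)).filter (fun i => s i ≤ e) ⊆ Finset.Icc 1 (i - 1) := by
        intro j hj
        simp only [Finset.mem_filter, Finset.mem_Icc] at hj
        simp only [Finset.mem_Icc]
        refine ⟨hj.1.1, ?_⟩
        by_contra hji
        have hij : i ≤ j := by omega
        exact hse (le_trans (hmono ⟨h1, h2⟩ ⟨hj.1.1, hj.1.2⟩ hij) hj.2)
      have hc := Finset.card_le_card hsub
      rw [Nat.card_Icc] at hc
      omega
  have hrlt : r < 2 ^ d := by omega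
  have main : ∀ m, m ≤ d → J m = 2 ^ m + r / 2 ^ (d - m) := by
    intro m
    induction m with
    | zero =>
      intro _
      simp [hJ0, Nat.div_eq_of_lt hrlt]
    | succ m ih =>
      intro hm
      have hmd : m < d := hm
      have ihm := ih (le_of_lt hmd)
      set q := 2 ^ (d - m - 1) with hq
      clear_value q
      have hq0 : 0 < q := by rw [hq]; exact Nat.pow_pos (by norm_num)
      have h2q : 2 ^ (d - m) = 2 * q := by
        have hdm : d - m = (d - m - 1) + 1 := by omega
        rw [hdm, pow_succ, hq]; ring
      set t := r / (2 * q) with ht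
      clear_value t
      have hpow : 2 ^ m * (2 * q) = 2 ^ d := by
        rw [← h2q, ← pow_add]; congr 1; omega
      have hpow' : 2 * q * 2 ^ m = 2 ^ d := by rw [mul_comm]; exact hpow
      have htlt : t < 2 ^ m := ht ▸ Nat.div_lt_of_lt_mul (hpow' ▸ hrlt)
      have hJm : J m = 2 ^ m + t := by rw [ihm, h2q, ← ht]
      have hlog : Nat.log 2 (J m) = m := by
        apply Nat.log_eq_of_pow_le_of_lt_pow
        · rw [hJm]; omega
        · rw [hJm, pow_succ]; omega
      have hidx : index (J m) = (2 * t + 1) * q := by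
        rw [hindex, hlog, hJm]
        have hsub : 2 ^ m + t - 2 ^ m = t := by omega
        rw [hsub, hq]
      have hpow2 : 2 ^ (m + 1) * q = 2 ^ d := by
        rw [hq, ← pow_add]; congr 1; omega
      have hbound1 : 1 ≤ (2 * t + 1) * q := Nat.mul_pos (by omega) hq0
      have hbound2 : (2 * t + 1) * q ≤ k - 1 := by
        have h1 : (2 * t + 1) * q + q = (2 * t + 2) * q := by ring
        have h2 : (2 * t + 2) * q ≤ 2 ^ (m + 1) * q := by
          apply Nat.mul_le_mul_right
          rw [pow_succ]
          omega
        omega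
      have hcond : a (J m) ≤ e ↔ (2 * t + 1) * q ≤ r := by
        rw [ha, hidx, key _ hbound1 hbound2]
      have hdiv : r / 2 ^ (d - (m + 1)) = r / q := by
        have hde : d - (m + 1) = d - m - 1 := by omega
        rw [hde, hq]
      have htq : r / q / 2 = t := by
        rw [ht, Nat.div_div_eq_div_mul, mul_comm q 2]
      have hub : r / q < 2 * t + 2 := by
        have : r / q / 2 < t + 1 := by omega
        have h2 := (Nat.div_lt_iff_lt_mul (by norm_num : 0 < 2)).1 this
        omega
      have hlb : 2 * t ≤ r / q := by
        have := Nat.div_mul_le_self (r / q) 2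
        rw [htq] at this
        omega
      rw [hJ m hmd, hdiv]
      split_ifs with h
      · have h1 : 2 * t + 1 ≤ r / q := by
          apply (Nat.le_div_iff_mul_le hq0).2
          exact hcond.1 h
        have hrq : r / q = 2 * t + 1 := by omega
        rw [hJm, hrq, pow_succ]
        ring
      · have h2 : r / q ≤ 2 * t := by
          by_contra hc
          exact h (hcond.2 ((Nat.le_div_iff_mul_le hq0).1 (by omega)))
        have hrq : r / q = 2 * t := by omega
        rw [hJm, hrq, pow_succ]
        ring
  have hfin := main d le_rfl
  rw [hfin, Nat.sub_self, pow_zero, Nat.div_one, hk]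
end

section
/- There is an absolute constant c > 0 with the following property. Let N, k, α be integers with k ≥ 2 and α ≥ 1, and let x_1, …, x_N be real numbers. Suppose a value v satisfies |{j ∈ {1,…,N} : x_j = v}| ≥ 2N/k. Draw m = αk − 1 indices J_1, …, J_m independently and uniformly at random from {1,…,N}. Then with probability at least 1 − e^{−cα}, at least α of the sampled values x_{J_1}, …, x_{J_m} equal v, and hence v is one of the equidistant pivots y_α, y_{2α}, …, y_{(k−1)α} of the sorted sample y_1 ≤ … ≤ y_{αk−1} obtained by sorting x_{J_1}, …, x_{J_m}. -/
attribute [local instance] Classical.propDecidable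

open Finset

private lemma bridge5 {m : ℕ} (f : Fin m → ℝ) (v : ℝ) :
    (Finset.univ.filter fun j => f j = v).card = (List.ofFn f).countP (fun y => decide (y = v)) := by
  have h1 : (Finset.univ.filter fun j => f j = v).card
      = Multiset.countP (fun y => y = v) (Finset.univ.val.map f) := by
    rw [Multiset.countP_map]; rfl
  rw [h1, Fin.univ_val_map, ← Multiset.coe_countP]

private lemma countsplit5 (l : List ℝ) (v : ℝ) :
    l.countP (fun y => decide (y ≤ v)) =
      l.countP (fun y => decide (y < v)) + l.countP (fun y => decide (y = v)) := by
  induction l with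
  | nil => simp
  | cons a t ih =>
    simp only [List.countP_cons, ih]
    rcases lt_trichotomy a v with h | h | h
    · rw [show decide (a ≤ v) = true from by simp [le_of_lt h],
        show decide (a < v) = true from by simp [h],
        show decide (a = v) = false from by simp [ne_of_lt h]]
      simp
      omega
    · rw [show decide (a ≤ v) = true from by simp [le_of_eq h],
        show decide (a < v) = false from by simp [h],
        show decide (a = v) = true from by simp [h]]
      simp
      omega
    · rw [show decide (a ≤ v) = false from by simp [not_le.2 h],
        show decide (a < v) = false from by simp [not_lt.2 h.le],
        show decide (a = v) = false from by simp [ne_of_gt h]]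
      simp

private lemma claim15 {l : List ℝ} (hs : l.Pairwise (· ≤ ·)) {v : ℝ} {q : ℕ} (hq : q < l.length)
    (h2 : q < l.countP (fun y => decide (y ≤ v))) : l[q] ≤ v := by
  by_contra hgt
  push_neg at hgt
  have hsplit : l.countP (fun y => decide (y ≤ v)) =
      (l.take q).countP (fun y => decide (y ≤ v)) + (l.drop q).countP (fun y => decide (y ≤ v)) := by
    conv_lhs => rw [← List.take_append_drop q l]
    rw [List.countP_append]
  have hdrop : (l.drop q).countP (fun y => decide (y ≤ v)) = 0 := by
    rw [List.countP_eq_zero]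
    intro a ha
    have hge : l[q] ≤ a := by
      rw [List.drop_eq_getElem_cons hq] at ha
      rcases List.mem_cons.1 ha with h | h
      · exact h ▸ le_refl _
      · have hsd : (l.drop q).Pairwise (· ≤ ·) := hs.drop
        rw [List.drop_eq_getElem_cons hq] at hsd
        exact (List.pairwise_cons.1 hsd).1 a h
    simp only [decide_eq_true_eq]
    exact not_le.2 (lt_of_lt_of_le hgt hge)
  have htake : (l.take q).countP (fun y => decide (y ≤ v)) ≤ q := by
    calc _ ≤ (l.take q).length := List.countP_le_length
    _ ≤ q := by simp [List.length_take]
  omega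

private lemma claim25 {l : List ℝ} (hs : l.Pairwise (· ≤ ·)) {v : ℝ} {q : ℕ} (hq : q < l.length)
    (h1 : l.countP (fun y => decide (y < v)) ≤ q) : v ≤ l[q] := by
  by_contra hlt
  push_neg at hlt
  have htake : (l.take (q+1)).countP (fun y => decide (y < v)) = q + 1 := by
    have hall : ∀ a ∈ l.take (q+1), (fun y => decide (y < v)) a = true := by
      intro a ha
      rw [List.mem_take_iff_getElem] at ha
      obtain ⟨i, hi, hia⟩ := ha
      have hile : i ≤ q := by omega
      have : l[i] ≤ l[q] :=
        hs.rel_get_of_le (by exact_mod_cast hile : (⟨i, by omega⟩ : Fin l.length) ≤ ⟨q, hq⟩)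
      simp only [decide_eq_true_eq]
      exact lt_of_le_of_lt (hia ▸ this) hlt
    rw [List.countP_eq_length.2 hall, List.length_take]
    omega
  have : q + 1 ≤ l.countP (fun y => decide (y < v)) := by
    conv_rhs => rw [← List.take_append_drop (q+1) l, List.countP_append]
    omega
  omega

private lemma card_filter_mono5 {X : Type*} {s : Finset X} {p q : X → Prop}
    [DecidablePred p] [DecidablePred q] (hpq : ∀ a ∈ s, q a → p a) :
    (s.filter q).card ≤ (s.filter p).card :=
  Finset.card_le_card fun a ha => by
    rw [Finset.mem_filter] at ha ⊢
    exact ⟨ha.1, hpq a ha.1 ha.2⟩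

private lemma pivot5 {k α : ℕ} (hk : 2 ≤ k) (hα : 1 ≤ α) {l : List ℝ} (hs : l.Pairwise (· ≤ ·))
    (hlen : l.length = α * k - 1) {v : ℝ}
    (hcnt : α ≤ l.countP (fun y => decide (y = v))) :
    ∃ i ∈ Finset.Icc 1 (k - 1), l.getD (i * α - 1) 0 = v := by
  set clt := l.countP (fun y => decide (y < v)) with hclt
  have hcle := countsplit5 l v
  have hαpos : 0 < α := hα
  have h1 : clt < (clt / α + 1) * α :=
    (Nat.div_lt_iff_lt_mul hαpos).1 (Nat.lt_succ_self _)
  have h2 : (clt / α + 1) * α ≤ clt + α := by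
    have h3 : clt / α * α ≤ clt := Nat.div_mul_le_self _ _
    have : (clt / α + 1) * α = clt / α * α + α := by ring
    omega
  set i := clt / α + 1 with hi
  have hcle_len : l.countP (fun y => decide (y ≤ v)) ≤ l.length := List.countP_le_length
  have hiacle : i * α ≤ l.countP (fun y => decide (y ≤ v)) := by omega
  have hik : i ≤ k - 1 := by
    have h4 : i * α < k * α := by
      have : α * k = k * α := Nat.mul_comm _ _
      omega
    have := Nat.lt_of_mul_lt_mul_right h4
    omega
  refine ⟨i, Finset.mem_Icc.2 ⟨Nat.succ_le_succ (Nat.zero_le _), hik⟩, ?_⟩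
  have hq : i * α - 1 < l.length := by omega
  rw [List.getD_eq_getElem l 0 hq]
  exact le_antisymm (claim15 hs hq (by omega)) (claim25 hs hq (by omega))

set_option maxHeartbeats 1000000 in
/-- Frequent keys become pivots with high probability. There is an absolute constant
`c > 0` such that for all integers `N`, `k ≥ 2`, `α ≥ 1`, reals `x 1, …, x N`, and any
value `v` occurring at least `2N/k` times among them, the following holds: drawing
`m = α·k - 1` indices `J 0, …, J (m-1)` independently and uniformly from `{1,…,N}`
(stated by counting the functions `J : Fin m → ℕ` with values in `{1,…,N}`), with
probability at least `1 - e^(-c·α)` at least `α` of the sampled values `x (J j)` equal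
`v`, and hence `v` is one of the equidistant pivots `y (i·α)`, `i ∈ {1,…,k-1}`, of the
sorted sample `y 1 ≤ … ≤ y m` obtained by sorting the sampled values. -/
theorem stmt_5 :
    ∃ c : ℝ, 0 < c ∧
      ∀ (N k α : ℕ) (x : ℕ → ℝ) (v : ℝ), 2 ≤ k → 1 ≤ α →
        2 * (N : ℝ) / (k : ℝ) ≤ (((Finset.Icc 1 N).filter fun j => x j = v).card : ℝ) →
        (1 - Real.exp (-c * (α : ℝ))) *
            ((Fintype.piFinset fun _ : Fin (α * k - 1) => Finset.Icc 1 N).card : ℝ) ≤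
          (((Fintype.piFinset fun _ : Fin (α * k - 1) => Finset.Icc 1 N).filter
              fun J : Fin (α * k - 1) → ℕ =>
                α ≤ (Finset.univ.filter fun j : Fin (α * k - 1) => x (J j) = v).card ∧
                ∃ i ∈ Finset.Icc 1 (k - 1),
                  ((List.ofFn fun j : Fin (α * k - 1) => x (J j)).insertionSort
                      (· ≤ ·)).getD (i * α - 1) 0 = v).card : ℝ) := by
  refine ⟨1 - Real.log 2, by have := Real.log_two_lt_d9; linarith, ?_⟩
  intro N k α x v hk hα hfreq
  have hαk : 2 ≤ α * k := le_trans hk (Nat.le_mul_of_pos_left k hα)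
  set m := α * k - 1 with hm
  have hm1 : 1 ≤ m := by omega
  set S := Finset.Icc 1 N with hS
  set T := Fintype.piFinset fun _ : Fin m => S with hTdef
  have hSc : S.card = N := by simp [hS]
  have hT : T.card = N ^ m := by
    rw [hTdef, Fintype.card_piFinset]
    simp [hSc]
  -- the count function
  set cnt : (Fin m → ℕ) → ℕ := fun J => (Finset.univ.filter fun j : Fin m => x (J j) = v).card
    with hcnt
  -- good implies pivot
  have hgp : ∀ J ∈ T, (α ≤ cnt J ∧
      ∃ i ∈ Finset.Icc 1 (k - 1),
        ((List.ofFn fun j : Fin m => x (J j)).insertionSort (· ≤ ·)).getD (i * α - 1) 0 = v)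
      ↔ α ≤ cnt J := by
    intro J _
    refine ⟨fun h => h.1, fun h => ⟨h, ?_⟩⟩
    set l := (List.ofFn fun j : Fin m => x (J j)).insertionSort (· ≤ ·) with hl
    have hsorted : l.Pairwise (· ≤ ·) := List.pairwise_insertionSort _ _
    have hlen : l.length = α * k - 1 := by
      rw [hl, List.length_insertionSort, List.length_ofFn]
    have hc : α ≤ l.countP (fun y => decide (y = v)) := by
      rw [hl, (List.perm_insertionSort (· ≤ ·) _).countP_eq]
      rw [← bridge5 (fun j : Fin m => x (J j)) v]
      exact h
    exact pivot5 hk hα hsorted hlen hc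
  -- trivial case N = 0
  rcases Nat.eq_zero_or_pos N with hN | hN
  · subst hN
    have : T.card = 0 := by rw [hT]; exact zero_pow (by omega)
    have hTe : T = ∅ := Finset.card_eq_zero.1 this
    rw [hTe]
    simp
  -- main case
  set G := T.filter fun J => α ≤ cnt J with hG
  set B := T.filter fun J => ¬ α ≤ cnt J with hB
  have hsplit : G.card + B.card = T.card :=
    Finset.card_filter_add_card_filter_not _
  set h := (S.filter fun j => x j = v).card with hh
  have hhN : h ≤ N := le_trans (Finset.card_filter_le _ _) (le_of_eq hSc)
  set w : ℕ → ℝ := fun i => if x i = v then (1/2 : ℝ) else 1 with hw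
  have hprod : ∀ J : Fin m → ℕ, (∏ j : Fin m, w (J j)) = (1/2 : ℝ) ^ (cnt J) := by
    intro J
    rw [show (∏ j : Fin m, w (J j)) = ∏ j : Fin m, (if x (J j) = v then (1/2:ℝ) else 1) from rfl,
      Finset.prod_ite]
    simp [hcnt]
  have hwsum : (∑ i ∈ S, w i) = (N : ℝ) - h / 2 := by
    rw [show (∑ i ∈ S, w i) = ∑ i ∈ S, (if x i = v then (1/2:ℝ) else 1) from rfl,
      Finset.sum_ite]
    have hcardneg : (S.filter fun j => ¬ x j = v).card = N - h := by
      have := Finset.card_filter_add_card_filter_not (s := S) (p := fun j => x j = v)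
      omega
    rw [Finset.sum_const, Finset.sum_const, hcardneg, ← hh]
    simp only [nsmul_eq_mul, mul_one]
    rw [Nat.cast_sub hhN]
    ring
  have hkey : (∑ J ∈ T, (1/2:ℝ) ^ (cnt J)) = ((N : ℝ) - h / 2) ^ m := by
    rw [← hwsum]
    rw [show (∑ J ∈ T, (1/2:ℝ) ^ (cnt J)) = ∑ J ∈ T, ∏ j : Fin m, w (J j) from
      Finset.sum_congr rfl fun J _ => (hprod J).symm]
    rw [hTdef, ← Finset.prod_univ_sum]
    rw [Finset.prod_const, Finset.card_univ, Fintype.card_fin]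
  have hBb : (B.card : ℝ) * (1/2) ^ (α - 1) ≤ ((N : ℝ) - h / 2) ^ m := by
    rw [← hkey]
    calc (B.card : ℝ) * (1/2) ^ (α - 1) = ∑ _J ∈ B, (1/2:ℝ) ^ (α - 1) := by
          rw [Finset.sum_const]; simp [mul_comm]
    _ ≤ ∑ J ∈ B, (1/2:ℝ) ^ (cnt J) := by
          refine Finset.sum_le_sum fun J hJ => ?_
          have hJlt : cnt J < α := not_le.1 (Finset.mem_filter.1 hJ).2
          exact pow_le_pow_of_le_one (by norm_num) (by norm_num) (by omega)
    _ ≤ ∑ J ∈ T, (1/2:ℝ) ^ (cnt J) :=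
          Finset.sum_le_sum_of_subset_of_nonneg (Finset.filter_subset _ _)
            (fun _ _ _ => by positivity)
  -- analytic bounds
  have hNpos : (0:ℝ) < N := by exact_mod_cast hN
  have hhNR : (h:ℝ) ≤ N := by exact_mod_cast hhN
  have hbase0 : (0:ℝ) ≤ (N : ℝ) - h / 2 := by linarith
  have hbase : (N : ℝ) - h / 2 ≤ N * Real.exp (-((h:ℝ) / (2 * N))) := by
    have h3 : 1 - (h:ℝ) / (2 * N) ≤ Real.exp (-((h:ℝ) / (2 * N))) := by
      have := Real.add_one_le_exp (-((h:ℝ) / (2 * N)))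
      linarith
    calc (N : ℝ) - h / 2 = N * (1 - (h:ℝ) / (2 * N)) := by field_simp
    _ ≤ N * Real.exp (-((h:ℝ) / (2 * N))) := mul_le_mul_of_nonneg_left h3 hNpos.le
  have hpow : ((N : ℝ) - h / 2) ^ m ≤ (N:ℝ) ^ m * Real.exp (-((h:ℝ) / (2 * N)) * m) := by
    calc ((N : ℝ) - h / 2) ^ m ≤ (N * Real.exp (-((h:ℝ) / (2 * N)))) ^ m :=
          pow_le_pow_left₀ hbase0 hbase m
    _ = (N:ℝ) ^ m * (Real.exp (-((h:ℝ) / (2 * N)))) ^ m := mul_pow _ _ _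
    _ = (N:ℝ) ^ m * Real.exp (-((h:ℝ) / (2 * N)) * m) := by
          rw [← Real.exp_nat_mul]; ring_nf
  have hmR : (m : ℝ) = (α:ℝ) * k - 1 := by
    rw [hm]
    push_cast [Nat.cast_sub (by omega : 1 ≤ α * k)]
    ring
  have hkR : (2:ℝ) ≤ k := by exact_mod_cast hk
  have hαR : (1:ℝ) ≤ α := by exact_mod_cast hα
  have hkpos : (0:ℝ) < k := by linarith
  have hexparg : (α:ℝ) - 1/2 ≤ (h:ℝ) / (2 * N) * m := by
    have h2Nk : 2 * (N:ℝ) ≤ h * k := by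
      rw [div_le_iff₀ hkpos] at hfreq
      linarith
    have hfrac : (1:ℝ) / k ≤ (h:ℝ) / (2 * N) := by
      rw [div_le_div_iff₀ hkpos (by linarith : (0:ℝ) < 2 * N)]
      nlinarith
    have hmnn : (0:ℝ) ≤ m := Nat.cast_nonneg m
    have := mul_le_mul_of_nonneg_right hfrac hmnn
    have heq : (1:ℝ) / k * m = (α:ℝ) - 1 / k := by
      rw [hmR]; field_simp
    have h1k : (1:ℝ) / k ≤ 1 / 2 := by
      rw [div_le_div_iff₀ hkpos (by norm_num : (0:ℝ) < 2)]
      linarith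
    linarith
  have hexpb : Real.exp (-((h:ℝ) / (2 * N)) * m) ≤ Real.exp (1/2 - (α:ℝ)) := by
    apply Real.exp_le_exp.2
    linarith
  have hBbound : (B.card : ℝ) ≤ Real.exp (-(1 - Real.log 2) * α) * (N:ℝ) ^ m := by
    have h2pow : ((2:ℝ)) ^ (α - 1) * (1/2:ℝ) ^ (α - 1) = 1 := by
      rw [← mul_pow]; norm_num
    have hstep : (B.card : ℝ) * (1/2) ^ (α - 1) ≤ (N:ℝ) ^ m * Real.exp (1/2 - (α:ℝ)) := by
      calc (B.card : ℝ) * (1/2) ^ (α - 1) ≤ ((N : ℝ) - h / 2) ^ m := hBb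
      _ ≤ (N:ℝ) ^ m * Real.exp (-((h:ℝ) / (2 * N)) * m) := hpow
      _ ≤ (N:ℝ) ^ m * Real.exp (1/2 - (α:ℝ)) :=
            mul_le_mul_of_nonneg_left hexpb (by positivity)
    have hBle : (B.card : ℝ) ≤ (2:ℝ) ^ (α - 1) * ((N:ℝ) ^ m * Real.exp (1/2 - (α:ℝ))) := by
      have := mul_le_mul_of_nonneg_left hstep (by positivity : (0:ℝ) ≤ (2:ℝ) ^ (α - 1))
      calc (B.card : ℝ) = (2:ℝ) ^ (α - 1) * ((B.card : ℝ) * (1/2) ^ (α - 1)) := by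
            rw [show (2:ℝ) ^ (α - 1) * ((B.card : ℝ) * (1/2) ^ (α - 1))
              = ((2:ℝ) ^ (α - 1) * (1/2:ℝ) ^ (α - 1)) * B.card from by ring, h2pow, one_mul]
      _ ≤ _ := this
    have h2exp : (2:ℝ) ^ (α - 1) = Real.exp (((α:ℕ) - 1 : ℕ) * Real.log 2) := by
      rw [Real.exp_nat_mul, Real.exp_log two_pos]
    have hcast : (((α:ℕ) - 1 : ℕ) : ℝ) = (α:ℝ) - 1 := by
      push_cast [Nat.cast_sub hα]; ring
    have hfinal : (2:ℝ) ^ (α - 1) * Real.exp (1/2 - (α:ℝ)) ≤ Real.exp (-(1 - Real.log 2) * α) := by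
      rw [h2exp, ← Real.exp_add, hcast]
      apply Real.exp_le_exp.2
      have := Real.log_two_gt_d9
      nlinarith
    calc (B.card : ℝ) ≤ (2:ℝ) ^ (α - 1) * ((N:ℝ) ^ m * Real.exp (1/2 - (α:ℝ))) := hBle
    _ = ((2:ℝ) ^ (α - 1) * Real.exp (1/2 - (α:ℝ))) * (N:ℝ) ^ m := by ring
    _ ≤ Real.exp (-(1 - Real.log 2) * α) * (N:ℝ) ^ m :=
          mul_le_mul_of_nonneg_right hfinal (by positivity)
  have hTR : (T.card : ℝ) = (N:ℝ) ^ m := by rw [hT]; push_cast; ring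
  have hGR : (G.card : ℝ) = (T.card : ℝ) - (B.card : ℝ) := by
    have : (G.card : ℝ) + B.card = T.card := by exact_mod_cast hsplit
    linarith
  have hexpand : (1 - Real.exp (-(1 - Real.log 2) * α)) * (N:ℝ) ^ m
      = (N:ℝ) ^ m - Real.exp (-(1 - Real.log 2) * α) * (N:ℝ) ^ m := by ring
  have hmain : (1 - Real.exp (-(1 - Real.log 2) * α)) * (T.card : ℝ) ≤ (G.card : ℝ) := by
    rw [hTR]
    linarith
  refine le_trans hmain (Nat.cast_le.2 (Finset.card_le_card fun J hJ => ?_))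
  rw [hG] at hJ
  simp only [Finset.mem_filter] at hJ ⊢
  exact ⟨hJ.1, hJ.2, ((hgp J hJ.1).2 hJ.2).2⟩
end
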